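/- arXiv:2504.21315 — 2 statements merged into one kernel-verified Lean document; each statement's English description precedes it below -/
import Mathlib

section
/- For every row vector R ∈ ℂ^{1×2} and every real phase φ, the jump matrix V(R,φ) is a positive-definite Hermitian matrix: for every nonzero vector v ∈ ℂ³ the quadratic form vᴴ V(R,φ) v is real and strictly positive. (In fact V(R,φ) = A Aᴴ with the invertible matrix A = [[1, −e^{−iφ}R],[0, I₂]].) -/
open Matrix

/-- The jump matrix of the Riemann–Hilbert problem for the focusing coupled
nonlinear Schrödinger equation. -/
noncomputable def jumpV (R : Matrix (Fin 1) (Fin 2) ℂ) (φ : ℝ) :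
    Matrix (Fin 1 ⊕ Fin 2) (Fin 1 ⊕ Fin 2) ℂ :=
  Matrix.fromBlocks (1 + R * Rᴴ)
    ((-Complex.exp (-(φ : ℂ) * Complex.I)) • R)
    ((-Complex.exp ((φ : ℂ) * Complex.I)) • Rᴴ)
    (1 : Matrix (Fin 2) (Fin 2) ℂ)

noncomputable def jumpA (R : Matrix (Fin 1) (Fin 2) ℂ) (φ : ℝ) :
    Matrix (Fin 1 ⊕ Fin 2) (Fin 1 ⊕ Fin 2) ℂ :=
  Matrix.fromBlocks 1 ((-Complex.exp (-(φ : ℂ) * Complex.I)) • R) 0 1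

lemma jumpV_eq (R : Matrix (Fin 1) (Fin 2) ℂ) (φ : ℝ) :
    jumpV R φ = jumpA R φ * (jumpA R φ)ᴴ := by
  have hc : (starRingEnd ℂ) (-Complex.exp (-(φ : ℂ) * Complex.I))
      = -Complex.exp ((φ : ℂ) * Complex.I) := by
    rw [map_neg, ← Complex.exp_conj]
    congr 1
    simp [Complex.conj_I, mul_comm]
  have hmul : (-Complex.exp (-(φ : ℂ) * Complex.I)) *
      (-Complex.exp ((φ : ℂ) * Complex.I)) = 1 := by
    rw [neg_mul_neg, ← Complex.exp_add]
    simp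
  unfold jumpV jumpA
  have hc' : (starRingEnd ℂ) (Complex.exp (-(↑φ * Complex.I)))
      = Complex.exp ((φ : ℂ) * Complex.I) := by
    rw [← Complex.exp_conj]; simp [Complex.conj_I]
  rw [fromBlocks_conjTranspose, fromBlocks_multiply]
  simp [conjTranspose_smul, hc', smul_smul, ← Complex.exp_add, Matrix.smul_mul,
      Matrix.mul_smul]

/-- For every row vector `R ∈ ℂ^{1×2}` and every real phase `φ`, the jump
matrix `V(R,φ)` is a positive-definite Hermitian matrix: it is Hermitian and
for every nonzero vector `v ∈ ℂ³` the quadratic form `vᴴ V(R,φ) v` is real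
and strictly positive. -/
theorem jumpV_posDef (R : Matrix (Fin 1) (Fin 2) ℂ) (φ : ℝ) :
    (jumpV R φ).IsHermitian ∧
      ∀ v : Fin 1 ⊕ Fin 2 → ℂ, v ≠ 0 →
        ∃ r : ℝ, 0 < r ∧ star v ⬝ᵥ (jumpV R φ) *ᵥ v = (r : ℂ) := by
  have hA : IsUnit (jumpA R φ).det := by
    unfold jumpA
    rw [Matrix.det_fromBlocks_zero₂₁]
    simp
  refine ⟨by rw [jumpV_eq]; exact isHermitian_mul_conjTranspose_self _, ?_⟩
  intro v hv
  set w : Fin 1 ⊕ Fin 2 → ℂ := (jumpA R φ)ᴴ *ᵥ v with hw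
  have hwne : w ≠ 0 := by
    have hu : IsUnit ((jumpA R φ)ᴴ).det := by
      rw [Matrix.det_conjTranspose]; exact hA.star
    have hinj : Function.Injective ((jumpA R φ)ᴴ).mulVec :=
      mulVec_injective_iff_isUnit.2 ((Matrix.isUnit_iff_isUnit_det _).2 hu)
    intro h
    apply hv
    have : (jumpA R φ)ᴴ *ᵥ v = (jumpA R φ)ᴴ *ᵥ 0 := by simpa [mulVec_zero] using h
    exact hinj this
  have hform : star v ⬝ᵥ (jumpV R φ) *ᵥ v = star w ⬝ᵥ w := by
    have hBB : jumpV R φ = ((jumpA R φ)ᴴ)ᴴ * (jumpA R φ)ᴴ := by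
      rw [jumpV_eq, conjTranspose_conjTranspose]
    rw [hBB, ← mulVec_mulVec, dotProduct_mulVec, vecMul_conjTranspose, star_star]
  refine ⟨∑ i, Complex.normSq (w i), ?_, ?_⟩
  · obtain ⟨i, hi⟩ := Function.ne_iff.1 hwne
    exact Finset.sum_pos' (fun j _ => Complex.normSq_nonneg _)
      ⟨i, Finset.mem_univ i, Complex.normSq_pos.2 hi⟩
  · rw [hform]
    simp [dotProduct, Complex.normSq_eq_conj_mul_self, Pi.star_apply]
end

section
/- Let V : ℝ → M₃(ℂ) be continuous with V(x)ᴴ = V(x) for every x ∈ ℝ. Suppose M₊ is a matrix-valued function continuous on the closed upper half-plane {λ : Im λ ≥ 0} and holomorphic on the open upper half-plane, M₋ is continuous on the closed lower half-plane {λ : Im λ ≤ 0} and holomorphic on the open lower half-plane, M₊(x) = M₋(x)·V(x) for every x ∈ ℝ, and M₊(λ) → I₃ and M₋(λ) → I₃ as |λ| → ∞ within their respective half-planes. Then M₊(λ)·(M₋(conj(λ)))ᴴ = I₃ for every λ with Im λ ≥ 0 (and hence M₋(λ)·(M₊(conj(λ)))ᴴ = I₃ for Im λ ≤ 0). -/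
open Matrix Filter

open Complex Asymptotics intervalIntegral Set Bornology in
private lemma rhp_hasDerivAt_conj_conj {u : ℂ → ℂ} {c w : ℂ} (h : HasDerivAt u c w) :
    HasDerivAt (fun z => starRingEnd ℂ (u (starRingEnd ℂ z))) (starRingEnd ℂ c)
      (starRingEnd ℂ w) := by
  rw [hasDerivAt_iff_isLittleO] at h ⊢
  have tconj : Tendsto (starRingEnd ℂ) (nhds (starRingEnd ℂ w)) (nhds w) := by
    simpa using (continuous_conj.tendsto (starRingEnd ℂ w))
  have h2 := h.comp_tendsto tconj
  rw [isLittleO_iff] at h2 ⊢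
  intro ε hε
  filter_upwards [h2 hε] with z hz
  simp only [Function.comp] at hz
  have e2 : ‖z - starRingEnd ℂ w‖ = ‖starRingEnd ℂ z - w‖ := by
    rw [← RCLike.norm_conj (starRingEnd ℂ z - w)]; simp [map_sub]
  have e1 : ‖(starRingEnd ℂ) (u ((starRingEnd ℂ) z)) -
      (starRingEnd ℂ) (u ((starRingEnd ℂ) ((starRingEnd ℂ) w))) -
      (z - (starRingEnd ℂ) w) • (starRingEnd ℂ) c‖
      = ‖u (starRingEnd ℂ z) - u w - (starRingEnd ℂ z - w) • c‖ := by
    rw [← RCLike.norm_conj (u (starRingEnd ℂ z) - u w - (starRingEnd ℂ z - w) • c)]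
    simp [map_sub, smul_eq_mul, _root_.map_mul]
  rw [e1, e2]
  exact hz

open Complex Asymptotics intervalIntegral Set in
private lemma rhp_morera_line {f : ℂ → ℂ} (hc : Continuous f)
    (hd : ∀ z : ℂ, z.im ≠ 0 → DifferentiableAt ℂ f z) : Differentiable ℂ f := by
  have hint : ∀ (g : ℝ → ℂ), Continuous g → ∀ a b : ℝ, IntervalIntegrable g
      MeasureTheory.volume a b := fun g hg a b => hg.intervalIntegrable a b
  set B : ℝ → ℝ → ℝ → ℝ → ℂ := fun a b c d =>
    (∫ x in a..b, f (x + c*I)) - (∫ x in a..b, f (x + d*I))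
      + I * (∫ y in c..d, f (b + y*I)) - I * ∫ y in c..d, f (a + y*I) with hBdef
  have hB0 : ∀ a b c d : ℝ, ((0 ≤ c ∧ 0 ≤ d) ∨ (c ≤ 0 ∧ d ≤ 0)) → B a b c d = 0 := by
    intro a b c d hcd
    have h := Complex.integral_boundary_rect_eq_zero_of_continuousOn_of_differentiableOn f
      (a + c*I) (b + d*I) (hc.continuousOn) ?_
    · simpa [hBdef, smul_eq_mul] using h
    · intro z hz
      rw [Complex.mem_reProdIm] at hz
      refine (hd z ?_).differentiableWithinAt
      have h2 := hz.2
      simp only [Complex.add_im, Complex.ofReal_im, Complex.mul_im, Complex.I_im,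
        Complex.ofReal_re, Complex.I_re, Complex.add_re, Complex.ofReal_re] at h2 ⊢
      ring_nf at h2
      rcases hcd with ⟨h1', h2'⟩ | ⟨h1', h2'⟩
      · have : (0:ℝ) ≤ min c d := le_min h1' h2'
        have := lt_of_le_of_lt this h2.1
        intro hzim; rw [hzim] at this; exact lt_irrefl 0 this
      · have : max c d ≤ 0 := max_le h1' h2'
        have := lt_of_lt_of_le h2.2 this
        intro hzim; rw [hzim] at this; exact lt_irrefl 0 this
  have hcont2 : ∀ b : ℝ, Continuous fun y : ℝ => f (b + y*I) := fun b =>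
    hc.comp (continuous_const.add (Complex.continuous_ofReal.mul continuous_const))
  have hBadd : ∀ a b c d : ℝ, B a b c 0 + B a b 0 d = B a b c d := by
    intro a b c d
    have v1 : (∫ y in c..(0:ℝ), f (b + y*I)) + (∫ y in (0:ℝ)..d, f (b + y*I))
        = ∫ y in c..d, f (b + y*I) :=
      integral_add_adjacent_intervals (hint _ (hcont2 b) c 0) (hint _ (hcont2 b) 0 d)
    have v2 : (∫ y in c..(0:ℝ), f (a + y*I)) + (∫ y in (0:ℝ)..d, f (a + y*I))
        = ∫ y in c..d, f (a + y*I) :=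
      integral_add_adjacent_intervals (hint _ (hcont2 a) c 0) (hint _ (hcont2 a) 0 d)
    simp only [hBdef]
    linear_combination I * v1 - I * v2
  have hB : ∀ a b c d : ℝ, B a b c d = 0 := by
    intro a b c d
    rcases le_total 0 c with h1 | h1 <;> rcases le_total 0 d with h2 | h2
    · exact hB0 a b c d (Or.inl ⟨h1, h2⟩)
    · rw [← hBadd a b c d, hB0 a b c 0 (Or.inl ⟨h1, le_refl 0⟩),
        hB0 a b 0 d (Or.inr ⟨le_refl 0, h2⟩), add_zero]
    · rw [← hBadd a b c d, hB0 a b c 0 (Or.inr ⟨h1, le_refl 0⟩),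
        hB0 a b 0 d (Or.inl ⟨le_refl 0, h2⟩), zero_add]
    · exact hB0 a b c d (Or.inr ⟨h1, h2⟩)
  set F : ℂ → ℂ := fun z => (∫ x in (0:ℝ)..z.re, f x) + I * ∫ y in (0:ℝ)..z.im, f (z.re + y*I)
    with hFdef
  have hcontR : Continuous fun x : ℝ => f x := hc.comp Complex.continuous_ofReal
  have hcontH : ∀ c : ℝ, Continuous fun x : ℝ => f (x + c*I) := fun c =>
    hc.comp (Complex.continuous_ofReal.add continuous_const)
  have key : ∀ z₀ w : ℂ, F w - F z₀ =
      (∫ x in z₀.re..w.re, f (x + z₀.im*I)) + I * ∫ y in z₀.im..w.im, f (w.re + y*I) := by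
    intro z₀ w
    have hBz := hB z₀.re w.re z₀.im 0
    simp only [hBdef, Complex.ofReal_zero, zero_mul, add_zero] at hBz
    have s1 : (∫ x in (0:ℝ)..z₀.re, f x) + (∫ x in z₀.re..w.re, f x)
        = ∫ x in (0:ℝ)..w.re, f x :=
      integral_add_adjacent_intervals (hint _ hcontR 0 z₀.re) (hint _ hcontR z₀.re w.re)
    have s2 : (∫ y in (0:ℝ)..z₀.im, f (w.re + y*I)) + (∫ y in z₀.im..w.im, f (w.re + y*I))
        = ∫ y in (0:ℝ)..w.im, f (w.re + y*I) :=
      integral_add_adjacent_intervals (hint _ (hcont2 w.re) 0 z₀.im) (hint _ (hcont2 w.re) z₀.im w.im)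
    have s3 : (∫ y in z₀.im..(0:ℝ), f (w.re + y*I)) = - ∫ y in (0:ℝ)..z₀.im, f (w.re + y*I) :=
      integral_symm 0 z₀.im
    have s4 : (∫ y in z₀.im..(0:ℝ), f (z₀.re + y*I)) = - ∫ y in (0:ℝ)..z₀.im, f (z₀.re + y*I) :=
      integral_symm 0 z₀.im
    simp only [hFdef]
    linear_combination -hBz - s1 - I*s2 + I*s3 - I*s4
  have hF : ∀ z₀ : ℂ, HasDerivAt F (f z₀) z₀ := by
    intro z₀
    rw [hasDerivAt_iff_isLittleO, isLittleO_iff]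
    intro ε hε
    rcases Metric.continuousAt_iff.1 hc.continuousAt (ε/2) (by positivity) with ⟨δ, hδ0, hδ⟩
    filter_upwards [Metric.ball_mem_nhds z₀ (half_pos hδ0)] with w hw
    rw [Metric.mem_ball] at hw
    have hre : |w.re - z₀.re| ≤ dist w z₀ := by
      rw [Complex.dist_eq]
      simpa using Complex.abs_re_le_norm (w - z₀)
    have him : |w.im - z₀.im| ≤ dist w z₀ := by
      rw [Complex.dist_eq]
      simpa using Complex.abs_im_le_norm (w - z₀)
    have b1 : ∀ x ∈ Set.uIoc z₀.re w.re, ‖f (x + z₀.im*I) - f z₀‖ ≤ ε/2 := by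
      intro x hx
      have hx' := Set.uIoc_subset_uIcc hx
      rw [← dist_eq_norm]
      refine le_of_lt (hδ ?_)
      have e : dist ((x : ℂ) + z₀.im*I) z₀ = |x - z₀.re| := by
        rw [Complex.dist_eq]
        have : (x : ℂ) + z₀.im*I - z₀ = ((x - z₀.re : ℝ) : ℂ) := by
          simp [Complex.ext_iff]
        rw [this, Complex.norm_real, Real.norm_eq_abs]
      rw [e]
      calc |x - z₀.re| ≤ |w.re - z₀.re| := abs_sub_left_of_mem_uIcc hx'
        _ ≤ dist w z₀ := hre
        _ < δ := by linarith
    have b2 : ∀ y ∈ Set.uIoc z₀.im w.im, ‖f (w.re + y*I) - f z₀‖ ≤ ε/2 := by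
      intro y hy
      have hy' := Set.uIoc_subset_uIcc hy
      rw [← dist_eq_norm]
      refine le_of_lt (hδ ?_)
      have e : dist ((w.re : ℂ) + y*I) z₀ ≤ |w.re - z₀.re| + |y - z₀.im| := by
        rw [Complex.dist_eq]
        have h1 := Complex.norm_le_abs_re_add_abs_im ((w.re : ℂ) + y*I - z₀)
        simpa using h1
      have : |y - z₀.im| ≤ |w.im - z₀.im| := abs_sub_left_of_mem_uIcc hy'
      calc dist ((w.re : ℂ) + y*I) z₀ ≤ |w.re - z₀.re| + |y - z₀.im| := e
        _ < δ/2 + δ/2 := by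
            have h1 := lt_of_le_of_lt hre hw
            have h2 : |y - z₀.im| < δ/2 := lt_of_le_of_lt (this.trans him) hw
            linarith
        _ = δ := by ring
    have EA : (∫ x in z₀.re..w.re, (f (x + z₀.im*I) - f z₀))
        = (∫ x in z₀.re..w.re, f (x + z₀.im*I)) - (w.re - z₀.re) • f z₀ := by
      rw [intervalIntegral.integral_sub (hint _ (hcontH z₀.im) _ _)
        (intervalIntegrable_const), intervalIntegral.integral_const]
    have EB : (∫ y in z₀.im..w.im, (f (w.re + y*I) - f z₀))
        = (∫ y in z₀.im..w.im, f (w.re + y*I)) - (w.im - z₀.im) • f z₀ := by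
      rw [intervalIntegral.integral_sub (hint _ (hcont2 w.re) _ _)
        (intervalIntegrable_const), intervalIntegral.integral_const]
    have hsplit : (w - z₀) = ((w.re - z₀.re : ℝ) : ℂ) + ((w.im - z₀.im : ℝ) : ℂ) * I := by
      simp [Complex.ext_iff]
    have main : F w - F z₀ - (w - z₀) • f z₀
        = (∫ x in z₀.re..w.re, (f (x + z₀.im*I) - f z₀))
          + I * (∫ y in z₀.im..w.im, (f (w.re + y*I) - f z₀)) := by
      simp only [Complex.real_smul, smul_eq_mul] at EA EB ⊢
      linear_combination key z₀ w - EA - I * EB - f z₀ * hsplit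
    rw [main]
    have n1 : ‖∫ x in z₀.re..w.re, (f (x + z₀.im*I) - f z₀)‖ ≤ ε/2 * |w.re - z₀.re| :=
      intervalIntegral.norm_integral_le_of_norm_le_const b1
    have n2 : ‖∫ y in z₀.im..w.im, (f (w.re + y*I) - f z₀)‖ ≤ ε/2 * |w.im - z₀.im| :=
      intervalIntegral.norm_integral_le_of_norm_le_const b2
    have hnorm : ‖w - z₀‖ = dist w z₀ := (dist_eq_norm w z₀).symm
    calc ‖(∫ x in z₀.re..w.re, (f (x + z₀.im*I) - f z₀))
          + I * (∫ y in z₀.im..w.im, (f (w.re + y*I) - f z₀))‖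
        ≤ ‖∫ x in z₀.re..w.re, (f (x + z₀.im*I) - f z₀)‖
          + ‖I * (∫ y in z₀.im..w.im, (f (w.re + y*I) - f z₀))‖ := norm_add_le _ _
      _ = ‖∫ x in z₀.re..w.re, (f (x + z₀.im*I) - f z₀)‖
          + ‖∫ y in z₀.im..w.im, (f (w.re + y*I) - f z₀)‖ := by
          rw [norm_mul, Complex.norm_I, one_mul]
      _ ≤ ε/2 * |w.re - z₀.re| + ε/2 * |w.im - z₀.im| := add_le_add n1 n2
      _ ≤ ε * ‖w - z₀‖ := by
          rw [hnorm]
          nlinarith [dist_nonneg (x := w) (y := z₀)]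
  have hFd : Differentiable ℂ F := fun z => (hF z).differentiableAt
  have hder : deriv F = f := funext fun z => (hF z).deriv
  have hAn : AnalyticOnNhd ℂ F Set.univ := fun z _ => hFd.analyticAt z
  intro z
  rw [← hder]
  exact (hAn.deriv z (Set.mem_univ z)).differentiableAt
open Complex Set Bornology in
private lemma rhp_eq_const_of_tendsto_cocompact {h : ℂ → ℂ} (hd : Differentiable ℂ h) {c : ℂ}
    (hl : Tendsto h (cocompact ℂ) (nhds c)) : ∀ z, h z = c := by
  have hev : ∀ᶠ z in cocompact ℂ, h z ∈ Metric.ball c 1 :=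
    hl (Metric.ball_mem_nhds c one_pos)
  rcases mem_cocompact.1 hev with ⟨K, hK, hKsub⟩
  have hb : IsBounded (range h) := by
    have : range h ⊆ h '' K ∪ Metric.ball c 1 := by
      rintro - ⟨z, rfl⟩
      by_cases hz : z ∈ K
      · exact Or.inl ⟨z, hz, rfl⟩
      · exact Or.inr (hKsub hz)
    exact IsBounded.subset (((hK.image hd.continuous).isBounded).union
      Metric.isBounded_ball) this
  have hconst : ∀ z w, h z = h w := fun z w => hd.apply_eq_apply_of_bounded hb z w
  intro z
  have h2 : Tendsto (fun _ : ℂ => h z) (cocompact ℂ) (nhds c) :=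
    hl.congr (fun w => hconst w z)
  haveI : NeBot (cocompact ℂ) := by
    rw [← Metric.cobounded_eq_cocompact]
    infer_instance
  exact tendsto_nhds_unique tendsto_const_nhds h2

open Complex in
private lemma rhp_comap_abs_atTop_eq : comap (fun z : ℂ => ‖z‖) atTop = cocompact ℂ := by
  have : (fun z : ℂ => ‖z‖) = norm := rfl
  rw [this, comap_norm_atTop, Metric.cobounded_eq_cocompact]
/-- Symmetry of the solution of the pole-free Riemann–Hilbert problem with
Hermitian jump matrix.  Let `V : ℝ → M₃(ℂ)` be continuous and pointwise
Hermitian.  Suppose `M₊` is continuous on the closed upper half-plane and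
holomorphic (entrywise) on the open upper half-plane, `M₋` is continuous on
the closed lower half-plane and holomorphic on the open lower half-plane,
`M₊(x) = M₋(x)·V(x)` on ℝ, and both tend to `I₃` as `|λ| → ∞` within their
half-planes.  Then `M₊(λ)·(M₋(conj λ))ᴴ = I₃` on the closed upper half-plane
and `M₋(λ)·(M₊(conj λ))ᴴ = I₃` on the closed lower half-plane. -/
theorem rhp_hermitian_symmetry
    (V : ℝ → Matrix (Fin 3) (Fin 3) ℂ)
    (hVcont : Continuous V)
    (hVherm : ∀ x : ℝ, (V x)ᴴ = V x)
    (Mp Mm : ℂ → Matrix (Fin 3) (Fin 3) ℂ)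
    (hMpcont : ContinuousOn Mp {z : ℂ | 0 ≤ z.im})
    (hMpdiff : ∀ i j : Fin 3,
      DifferentiableOn ℂ (fun z => Mp z i j) {z : ℂ | 0 < z.im})
    (hMmcont : ContinuousOn Mm {z : ℂ | z.im ≤ 0})
    (hMmdiff : ∀ i j : Fin 3,
      DifferentiableOn ℂ (fun z => Mm z i j) {z : ℂ | z.im < 0})
    (hjump : ∀ x : ℝ, Mp (x : ℂ) = Mm (x : ℂ) * V x)
    (hMplim : Tendsto Mp
      (comap (fun z : ℂ => ‖z‖) atTop ⊓ principal {z : ℂ | 0 ≤ z.im}) (nhds 1))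
    (hMmlim : Tendsto Mm
      (comap (fun z : ℂ => ‖z‖) atTop ⊓ principal {z : ℂ | z.im ≤ 0}) (nhds 1)) :
    (∀ z : ℂ, 0 ≤ z.im → Mp z * (Mm (starRingEnd ℂ z))ᴴ = 1) ∧
    (∀ z : ℂ, z.im ≤ 0 → Mm z * (Mp (starRingEnd ℂ z))ᴴ = 1) := by

  classical
  set U : Set ℂ := {z : ℂ | 0 ≤ z.im} with hUdef
  set L : Set ℂ := {z : ℂ | z.im ≤ 0} with hLdef
  have hUc : IsClosed U := isClosed_le continuous_const Complex.continuous_im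
  have hLc : IsClosed L := isClosed_le Complex.continuous_im continuous_const
  have hUo : IsOpen {z : ℂ | 0 < z.im} := isOpen_lt continuous_const Complex.continuous_im
  have hLo : IsOpen {z : ℂ | z.im < 0} := isOpen_lt Complex.continuous_im continuous_const
  have hUL : (Set.univ : Set ℂ) = U ∪ L := by
    ext z
    simp only [Set.mem_univ, Set.mem_union, hUdef, hLdef, Set.mem_setOf_eq, true_iff]
    exact (le_total 0 z.im).imp id id
  set Hu : ℂ → Matrix (Fin 3) (Fin 3) ℂ := fun z => Mp z * (Mm (starRingEnd ℂ z))ᴴ with hHudef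
  set Hl : ℂ → Matrix (Fin 3) (Fin 3) ℂ := fun z => Mm z * (Mp (starRingEnd ℂ z))ᴴ with hHldef
  set H : ℂ → Matrix (Fin 3) (Fin 3) ℂ := fun z => if 0 ≤ z.im then Hu z else Hl z with hHdef
  -- the jump relation gives matching boundary values
  have hreal : ∀ z : ℂ, z.im = 0 → Hu z = Hl z := by
    intro z hz
    have hzr : ((z.re : ℝ) : ℂ) = z := by
      simp [Complex.ext_iff, hz]
    have hcz : starRingEnd ℂ z = z := by
      rw [← hzr, Complex.conj_ofReal]
    simp only [hHudef, hHldef, hcz]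
    rw [← hzr, hjump z.re, Matrix.conjTranspose_mul, hVherm z.re, Matrix.mul_assoc]
  -- continuity of the two halves
  have hmapsUL : ∀ z : ℂ, z ∈ U → starRingEnd ℂ z ∈ L := by
    intro z hz
    simp only [hLdef, Set.mem_setOf_eq, Complex.conj_im]
    simp only [hUdef, Set.mem_setOf_eq] at hz
    linarith
  have hmapsLU : ∀ z : ℂ, z ∈ L → starRingEnd ℂ z ∈ U := by
    intro z hz
    simp only [hUdef, Set.mem_setOf_eq, Complex.conj_im]
    simp only [hLdef, Set.mem_setOf_eq] at hz
    linarith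
  have hCT : Continuous (fun A : Matrix (Fin 3) (Fin 3) ℂ => Aᴴ) :=
    continuous_id.matrix_conjTranspose
  have cHu : ContinuousOn Hu U := by
    have c1 : ContinuousOn (fun z => Mm (starRingEnd ℂ z)) U :=
      hMmcont.comp Complex.continuous_conj.continuousOn hmapsUL
    exact hMpcont.mul (hCT.comp_continuousOn c1)
  have cHl : ContinuousOn Hl L := by
    have c1 : ContinuousOn (fun z => Mp (starRingEnd ℂ z)) L :=
      hMpcont.comp Complex.continuous_conj.continuousOn hmapsLU
    exact hMmcont.mul (hCT.comp_continuousOn c1)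
  -- continuity of the glued function
  have cH : Continuous H := by
    rw [← continuousOn_univ, hUL]
    intro z _
    apply ContinuousWithinAt.union
    · by_cases hzU : 0 ≤ z.im
      · exact ((cHu z hzU).congr (fun w hw => if_pos hw) (if_pos hzU))
      · exact continuousWithinAt_of_notMem_closure (by rwa [hUc.closure_eq])
    · by_cases hzL : z.im ≤ 0
      · have heq : ∀ w ∈ L, H w = Hl w := by
          intro w hw
          by_cases hw0 : 0 ≤ w.im
          · have hw1 : w.im = 0 := le_antisymm hw hw0
            simp only [hHdef, if_pos hw0]
            exact hreal w hw1
          · simp only [hHdef, if_neg hw0]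
        exact ((cHl z hzL).congr heq (heq z hzL))
      · exact continuousWithinAt_of_notMem_closure (by rwa [hLc.closure_eq])
  -- differentiability of entries off the real line
  have hdiff : ∀ i j : Fin 3, ∀ z : ℂ, z.im ≠ 0 →
      DifferentiableAt ℂ (fun w => H w i j) z := by
    intro i j z hz
    rcases hz.lt_or_gt with hneg | hpos
    · have hev : (fun w => H w i j) =ᶠ[nhds z]
          fun w => ∑ k, Mm w i k * starRingEnd ℂ (Mp (starRingEnd ℂ w) j k) := by
        filter_upwards [hLo.mem_nhds hneg] with w hw
        simp only [hHdef, if_neg (not_le.2 hw), hHldef, Matrix.mul_apply,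
          Matrix.conjTranspose_apply, Complex.star_def]
      rw [hev.differentiableAt_iff]
      apply DifferentiableAt.fun_sum
      intro k _
      apply DifferentiableAt.mul
      · exact (hMmdiff i k).differentiableAt (hLo.mem_nhds hneg)
      · have hu : DifferentiableAt ℂ (fun w => Mp w j k) (starRingEnd ℂ z) :=
          (hMpdiff j k).differentiableAt (hUo.mem_nhds (by
            simp only [Set.mem_setOf_eq, Complex.conj_im]; linarith))
        have h2 := rhp_hasDerivAt_conj_conj hu.hasDerivAt
        rw [Complex.conj_conj] at h2
        exact h2.differentiableAt
    · have hev : (fun w => H w i j) =ᶠ[nhds z]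
          fun w => ∑ k, Mp w i k * starRingEnd ℂ (Mm (starRingEnd ℂ w) j k) := by
        filter_upwards [hUo.mem_nhds hpos] with w hw
        simp only [hHdef, if_pos (le_of_lt hw), hHudef, Matrix.mul_apply,
          Matrix.conjTranspose_apply, Complex.star_def]
      rw [hev.differentiableAt_iff]
      apply DifferentiableAt.fun_sum
      intro k _
      apply DifferentiableAt.mul
      · exact (hMpdiff i k).differentiableAt (hUo.mem_nhds hpos)
      · have hu : DifferentiableAt ℂ (fun w => Mm w j k) (starRingEnd ℂ z) :=
          (hMmdiff j k).differentiableAt (hLo.mem_nhds (by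
            simp only [Set.mem_setOf_eq, Complex.conj_im]; linarith))
        have h2 := rhp_hasDerivAt_conj_conj hu.hasDerivAt
        rw [Complex.conj_conj] at h2
        exact h2.differentiableAt
  -- the limit at infinity
  have hsup : comap (fun z : ℂ => ‖z‖) atTop ⊓ principal U ⊔ comap (fun z : ℂ => ‖z‖) atTop ⊓ principal L
      = cocompact ℂ := by
    rw [← inf_sup_left, sup_principal, ← hUL, principal_univ, inf_top_eq,
      rhp_comap_abs_atTop_eq]
  have tconjU : Tendsto (starRingEnd ℂ) (comap (fun z : ℂ => ‖z‖) atTop ⊓ principal U)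
      (comap (fun z : ℂ => ‖z‖) atTop ⊓ principal L) := by
    rw [tendsto_inf]
    constructor
    · rw [tendsto_comap_iff]
      have e : ((fun z : ℂ => ‖z‖) ∘ ⇑(starRingEnd ℂ)) = fun z : ℂ => ‖z‖ :=
        funext fun z => Complex.norm_conj z
      rw [e]
      exact tendsto_comap.mono_left inf_le_left
    · rw [tendsto_principal]
      filter_upwards [mem_inf_of_right (mem_principal_self U)] with z hz
      exact hmapsUL z hz
  have tconjL : Tendsto (starRingEnd ℂ) (comap (fun z : ℂ => ‖z‖) atTop ⊓ principal L)
      (comap (fun z : ℂ => ‖z‖) atTop ⊓ principal U) := by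
    rw [tendsto_inf]
    constructor
    · rw [tendsto_comap_iff]
      have e : ((fun z : ℂ => ‖z‖) ∘ ⇑(starRingEnd ℂ)) = fun z : ℂ => ‖z‖ :=
        funext fun z => Complex.norm_conj z
      rw [e]
      exact tendsto_comap.mono_left inf_le_left
    · rw [tendsto_principal]
      filter_upwards [mem_inf_of_right (mem_principal_self L)] with z hz
      exact hmapsLU z hz
  have tHu : Tendsto Hu (comap (fun z : ℂ => ‖z‖) atTop ⊓ principal U) (nhds 1) := by
    have t1 := hMmlim.comp tconjU
    have t2 := ((hCT.tendsto (1 : Matrix (Fin 3) (Fin 3) ℂ)).comp t1)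
    have t3 := hMplim.mul t2
    simpa using t3
  have tHl : Tendsto Hl (comap (fun z : ℂ => ‖z‖) atTop ⊓ principal L) (nhds 1) := by
    have t1 := hMplim.comp tconjL
    have t2 := ((hCT.tendsto (1 : Matrix (Fin 3) (Fin 3) ℂ)).comp t1)
    have t3 := hMmlim.mul t2
    simpa using t3
  have tH : Tendsto H (cocompact ℂ) (nhds 1) := by
    rw [← hsup, tendsto_sup]
    constructor
    · apply tHu.congr'
      filter_upwards [mem_inf_of_right (mem_principal_self U)] with z hz
      exact (if_pos hz).symm
    · apply tHl.congr'
      filter_upwards [mem_inf_of_right (mem_principal_self L)] with z hz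
      by_cases hz0 : 0 ≤ z.im
      · have hz1 : z.im = 0 := le_antisymm hz hz0
        simp only [hHdef, if_pos hz0]
        exact (hreal z hz1).symm
      · simp only [hHdef, if_neg hz0]
  -- Liouville: H ≡ 1
  have hH1 : ∀ z : ℂ, H z = 1 := by
    intro z
    ext i j
    have centry : Continuous (fun A : Matrix (Fin 3) (Fin 3) ℂ => A i j) :=
      (continuous_apply j).comp (continuous_apply i)
    have hdent : Differentiable ℂ (fun w => H w i j) :=
      rhp_morera_line (centry.comp cH) (hdiff i j)
    have htent : Tendsto (fun w => H w i j) (cocompact ℂ)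
        (nhds ((1 : Matrix (Fin 3) (Fin 3) ℂ) i j)) :=
      ((centry.tendsto (1 : Matrix (Fin 3) (Fin 3) ℂ)).comp tH)
    exact rhp_eq_const_of_tendsto_cocompact hdent htent z
  constructor
  · intro z hz
    have h2 : Hu z = 1 := by
      have := hH1 z
      simpa [hHdef, hz] using this
    exact h2
  · intro z hz
    by_cases h0 : 0 ≤ z.im
    · have hz1 : z.im = 0 := le_antisymm hz h0
      have h2 : Hl z = 1 := by
        rw [← hreal z hz1]
        have := hH1 z
        simpa [hHdef, h0] using this
      exact h2
    · have h2 : Hl z = 1 := by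
        have := hH1 z
        simpa [hHdef, h0] using this
      exact h2
end
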